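/- For all α, β ∈ ℂ, the inner product of two coherent states satisfies ⟪coh α, coh β⟫ = exp(−(|α|² + |β|²)/2 + conj(α)·β). -/

import Mathlib

open scoped ComplexConjugate ENNReal

/-- The components of the coherent state `|α⟩`: `exp(−|α|²/2)·αⁿ/√(n!)`. -/
noncomputable def cohFun (α : ℂ) : ℕ → ℂ := fun n =>
  (Real.exp (-‖α‖ ^ 2 / 2) / Real.sqrt (Nat.factorial n) : ℝ) * α ^ n

lemma cohFun_memℓp (α : ℂ) : Memℓp (cohFun α) 2 := by
  apply memℓp_gen
  have h : Summable (fun n : ℕ =>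
      Real.exp (-‖α‖ ^ 2 / 2) ^ 2 * ((‖α‖ ^ 2) ^ n / (Nat.factorial n))) :=
    (Real.summable_pow_div_factorial (‖α‖ ^ 2)).mul_left _
  refine h.congr fun n => ?_
  have h2 : ((2 : ℝ≥0∞).toReal) = (2 : ℝ) := by norm_num
  rw [h2, Real.rpow_two]
  have hn : ‖cohFun α n‖ = Real.exp (-‖α‖ ^ 2 / 2) / Real.sqrt (Nat.factorial n) * ‖α‖ ^ n := by
    simp only [cohFun, norm_mul, norm_pow, Complex.norm_real, Real.norm_eq_abs]
    rw [abs_of_pos (by positivity)]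
  rw [hn, mul_pow, div_pow, Real.sq_sqrt (by positivity), pow_right_comm]
  ring

/-- The coherent state `|α⟩` as an element of `ℓ²(ℕ, ℂ)`. -/
noncomputable def coh (α : ℂ) : lp (fun _ : ℕ => ℂ) 2 := ⟨cohFun α, cohFun_memℓp α⟩

/-- inner product of two coherent states. -/
theorem inner_coh_coh (α β : ℂ) :
    inner (𝕜 := ℂ) (coh α) (coh β)
      = Complex.exp (-(((‖α‖ ^ 2 + ‖β‖ ^ 2 : ℝ)) : ℂ) / 2 + conj α * β) := by
  rw [lp.inner_eq_tsum]
  have hterm : ∀ n : ℕ, (inner (𝕜 := ℂ) ((coh α) n) ((coh β) n))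
      = Complex.exp (-(((‖α‖ ^ 2 + ‖β‖ ^ 2 : ℝ)) : ℂ) / 2) *
        ((conj α * β) ^ n / (Nat.factorial n : ℂ)) := by
    intro n
    have hfac : (0 : ℝ) < Real.sqrt (Nat.factorial n) := by positivity
    rw [RCLike.inner_apply]
    show cohFun β n * conj (cohFun α n) = _
    simp only [cohFun, map_mul, map_pow, Complex.conj_ofReal]
    have hs : Real.sqrt (Nat.factorial n) * Real.sqrt (Nat.factorial n)
        = (Nat.factorial n : ℝ) := Real.mul_self_sqrt (by positivity)
    have hre : (Real.exp (-‖α‖ ^ 2 / 2) / Real.sqrt (Nat.factorial n))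
        * (Real.exp (-‖β‖ ^ 2 / 2) / Real.sqrt (Nat.factorial n))
        = Real.exp (-(‖α‖ ^ 2 + ‖β‖ ^ 2) / 2) / (Nat.factorial n : ℝ) := by
      rw [div_mul_div_comm, hs, ← Real.exp_add]; ring_nf
    have hc : (-(((‖α‖ ^ 2 + ‖β‖ ^ 2 : ℝ)) : ℂ) / 2)
        = ((-(‖α‖ ^ 2 + ‖β‖ ^ 2) / 2 : ℝ) : ℂ) := by push_cast; ring
    rw [hc, ← Complex.ofReal_exp, mul_pow]
    have hrec := congrArg (Complex.ofReal) hre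
    push_cast at hrec
    have hs0 : (Real.sqrt (Nat.factorial n) : ℂ) ≠ 0 := by exact_mod_cast hfac.ne'
    have hn0 : ((Nat.factorial n : ℝ) : ℂ) ≠ 0 := by
      exact_mod_cast (Nat.cast_pos.mpr (Nat.factorial_pos n)).ne'
    have hrec2 : ((Real.exp (-‖α‖ ^ 2 / 2) / Real.sqrt (Nat.factorial n) : ℝ) : ℂ)
        * ((Real.exp (-‖β‖ ^ 2 / 2) / Real.sqrt (Nat.factorial n) : ℝ) : ℂ)
        = (Real.exp (-(‖α‖ ^ 2 + ‖β‖ ^ 2) / 2) : ℂ) / (Nat.factorial n : ℂ) := by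
      rw [← Complex.ofReal_mul, hre, Complex.ofReal_div, Complex.ofReal_natCast]
    linear_combination ((starRingEnd ℂ) α ^ n * β ^ n) * hrec2
  rw [tsum_congr hterm, tsum_mul_left]
  have hsum : ∑' n : ℕ, ((conj α * β) ^ n / (Nat.factorial n : ℂ))
      = Complex.exp (conj α * β) := by
    rw [Complex.exp_eq_exp_ℂ, NormedSpace.exp_eq_tsum_div]
  rw [hsum, ← Complex.exp_add]
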